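/- Let ν, κ, γ, a, b, 𝒞 be positive real constants. For every ϱ > 0, every complex eigenvalue λ of the matrix A(ϱ) has strictly positive real part. -/

import Mathlib

open Matrix

/-- The symbol matrix `A(ϱ)` of the linearized diffusion-approximation radiation
hydrodynamics system in Fourier variables. -/
noncomputable def radA (ν κ γ a b 𝒞 ϱ : ℝ) : Matrix (Fin 4) (Fin 4) ℝ :=
  !![0, ϱ, 0, 0;
     -ϱ, ν * ϱ ^ 2, -ϱ, -ϱ / (3 * 𝒞);
     0, (2 / 3) * ϱ, (2 / 3) * κ * ϱ ^ 2 + (2 / 3) * γ, -(2 / 3) * b;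
     0, 0, -𝒞 * γ, a * ϱ ^ 2 + 𝒞 * b]

/-- Routh–Hurwitz for a monic real quartic with positive coefficients and positive
Routh determinant: every complex root has negative real part. -/
lemma quartic_root_neg_re (A3 A2 A1 A0 : ℝ) (z : ℂ)
    (hq : z ^ 4 + (A3 : ℂ) * z ^ 3 + (A2 : ℂ) * z ^ 2 + (A1 : ℂ) * z + (A0 : ℂ) = 0)
    (h3 : 0 < A3) (h2 : 0 < A2) (h1 : 0 < A1) (h0 : 0 < A0)
    (hΔ : 0 < A3 * A2 * A1 - A1 ^ 2 - A3 ^ 2 * A0) : z.re < 0 := by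
  by_contra hxc
  push_neg at hxc
  rcases eq_or_ne z.im 0 with hy | hy
  · have hz : z = (z.re : ℂ) := by
      apply Complex.ext
      · simp
      · simp [hy]
    rw [hz] at hq
    have hre : z.re ^ 4 + A3 * z.re ^ 3 + A2 * z.re ^ 2 + A1 * z.re + A0 = 0 := by
      exact_mod_cast hq
    nlinarith [pow_nonneg hxc 4, mul_nonneg h3.le (pow_nonneg hxc 3),
      mul_nonneg h2.le (pow_nonneg hxc 2), mul_nonneg h1.le hxc]
  · set x := z.re with hxdef
    set y := z.im with hydef
    have hzx : z - (x : ℂ) = (y : ℂ) * Complex.I := by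
      apply Complex.ext <;> simp [hxdef, hydef]
    have h2z : z ^ 2 - 2 * (x : ℂ) * z + ((x : ℂ) ^ 2 + (y : ℂ) ^ 2) = 0 := by
      have hsq : (z - (x : ℂ)) ^ 2 = (y : ℂ) ^ 2 * Complex.I ^ 2 := by rw [hzx]; ring
      rw [Complex.I_sq] at hsq
      linear_combination hsq
    have hlin : ((A1 + 2*x*(A2 - (x^2+y^2) + 2*x*(A3+2*x)) - (x^2+y^2)*(A3+2*x) : ℝ) : ℂ) * z
        + ((A0 - (x^2+y^2)*(A2 - (x^2+y^2) + 2*x*(A3+2*x)) : ℝ) : ℂ) = 0 := by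
      push_cast
      linear_combination hq - (z ^ 2 + ((A3:ℂ) + 2*(x:ℂ)) * z
        + ((A2:ℂ) - ((x:ℂ)^2+(y:ℂ)^2) + 2*(x:ℂ)*((A3:ℂ)+2*(x:ℂ)))) * h2z
    have him : (A1 + 2*x*(A2 - (x^2+y^2) + 2*x*(A3+2*x)) - (x^2+y^2)*(A3+2*x)) * y = 0 := by
      have h := congrArg Complex.im hlin
      simpa [Complex.add_im, Complex.mul_im, ← Complex.ofReal_pow] using h
    have hα : A1 + 2*x*(A2 - (x^2+y^2) + 2*x*(A3+2*x)) - (x^2+y^2)*(A3+2*x) = 0 := by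
      rcases mul_eq_zero.mp him with h | h
      · exact h
      · exact absurd h hy
    have hre2 : (A1 + 2*x*(A2 - (x^2+y^2) + 2*x*(A3+2*x)) - (x^2+y^2)*(A3+2*x)) * x
        + (A0 - (x^2+y^2)*(A2 - (x^2+y^2) + 2*x*(A3+2*x))) = 0 := by
      have h := congrArg Complex.re hlin
      simpa [Complex.add_re, Complex.mul_re, ← Complex.ofReal_pow] using h
    have hβ : A0 - (x^2+y^2)*(A2 - (x^2+y^2) + 2*x*(A3+2*x)) = 0 := by
      linear_combination hre2 - x * hα
    have hA1v : A1 = (x^2+y^2)*(A3+2*x) - 2*x*(A2 - (x^2+y^2) + 2*x*(A3+2*x)) := by linarith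
    have hA0v : A0 = (x^2+y^2)*(A2 - (x^2+y^2) + 2*x*(A3+2*x)) := by linarith
    have hΔeq : A3 * A2 * A1 - A1 ^ 2 - A3 ^ 2 * A0
        = (-2*x)*(A3+2*x)*(((x^2+y^2) - (A2 - (x^2+y^2) + 2*x*(A3+2*x)))^2 + A3*A1) := by
      rw [hA1v, hA0v]; ring
    have hBig : 0 < ((x^2+y^2) - (A2 - (x^2+y^2) + 2*x*(A3+2*x)))^2 + A3*A1 := by positivity
    have hprod : 0 < (-2*x)*(A3+2*x) := by
      by_contra hP
      push_neg at hP
      nlinarith [mul_nonneg (neg_nonneg.mpr hP) hBig.le]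
    nlinarith [hprod]

set_option maxRecDepth 20000 in
set_option maxHeartbeats 4000000 in
/-- For every `ϱ > 0`, every complex eigenvalue of `A(ϱ)` has strictly positive real part
(Routh–Hurwitz criterion). -/
theorem radA_eigenvalues_pos_re (ν κ γ a b 𝒞 : ℝ)
    (hν : 0 < ν) (hκ : 0 < κ) (hγ : 0 < γ) (ha : 0 < a) (hb : 0 < b) (h𝒞 : 0 < 𝒞) :
    ∀ ϱ : ℝ, 0 < ϱ →
      ∀ μ : ℂ, μ ∈ spectrum ℂ ((radA ν κ γ a b 𝒞 ϱ).map Complex.ofReal) → 0 < μ.re := by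
  intro ϱ hϱ μ hμ
  rw [spectrum.mem_iff] at hμ
  have hdet : (algebraMap ℂ (Matrix (Fin 4) (Fin 4) ℂ) μ
      - (radA ν κ γ a b 𝒞 ϱ).map Complex.ofReal).det = 0 := by
    by_contra hd
    exact hμ ((Matrix.isUnit_iff_isUnit_det _).mpr (Ne.isUnit hd))
  simp [radA, Matrix.det_succ_row_zero, Fin.sum_univ_succ, Matrix.algebraMap_matrix_apply,
    Matrix.map_apply, Fin.succAbove,
    Matrix.cons_val_zero, Matrix.cons_val_one] at hdet
  have h𝒞' : (𝒞 : ℂ) ≠ 0 := Complex.ofReal_ne_zero.mpr (ne_of_gt h𝒞)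
  have hc : (𝒞 : ℂ) * (𝒞 : ℂ)⁻¹ = 1 := mul_inv_cancel₀ h𝒞'
  set A3 : ℝ := ν * ϱ ^ 2 + (2/3) * κ * ϱ ^ 2 + (2/3) * γ + a * ϱ ^ 2 + 𝒞 * b with hA3
  set A2 : ℝ := (2/3) * ϱ ^ 2 * (κ * a * ϱ ^ 2 + κ * 𝒞 * b + γ * a)
      + ν * ϱ ^ 2 * ((2/3) * κ * ϱ ^ 2 + (2/3) * γ + a * ϱ ^ 2 + 𝒞 * b)
      + (5/3) * ϱ ^ 2 with hA2
  set A1 : ℝ := ν * ϱ ^ 2 * ((2/3) * ϱ ^ 2 * (κ * a * ϱ ^ 2 + κ * 𝒞 * b + γ * a))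
      + ϱ ^ 2 * ((2/3) * κ * ϱ ^ 2 + (2/3) * γ + a * ϱ ^ 2 + 𝒞 * b)
      + (2/3) * ϱ ^ 2 * (a * ϱ ^ 2 + 𝒞 * b) + (2/9) * ϱ ^ 2 * γ with hA1
  set A0 : ℝ := (2/3) * ϱ ^ 4 * (κ * a * ϱ ^ 2 + κ * 𝒞 * b + γ * a) with hA0
  have hq : (-μ) ^ 4 + (A3 : ℂ) * (-μ) ^ 3 + (A2 : ℂ) * (-μ) ^ 2
      + (A1 : ℂ) * (-μ) + (A0 : ℂ) = 0 := by
    push_cast [hA3, hA2, hA1, hA0]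
    linear_combination hdet + ((2/9) * μ * (ϱ:ℂ) ^ 2 * (γ:ℂ)) * hc
  have h3 : 0 < A3 := by rw [hA3]; positivity
  have h2 : 0 < A2 := by rw [hA2]; positivity
  have h1 : 0 < A1 := by rw [hA1]; positivity
  have h0 : 0 < A0 := by rw [hA0]; positivity
  have hΔ : 0 < A3 * A2 * A1 - A1 ^ 2 - A3 ^ 2 * A0 := by
    have hexp : A3 * A2 * A1 - A1 ^ 2 - A3 ^ 2 * A0 = ((10/27)*γ*b*𝒞*ϱ^4 + (10/27)*γ*a*ϱ^6 + (4/9)*γ*a*b^2*𝒞^2*ϱ^4 + (8/9)*γ*a^2*b*𝒞*ϱ^6 + (4/9)*γ*a^3*ϱ^8 + (16/81)*γ^2*ϱ^4 + (4/9)*γ^2*a*b*𝒞*ϱ^4 + (4/9)*γ^2*a^2*ϱ^6 + (8/81)*γ^3*a*ϱ^4 + (20/27)*κ*b*𝒞*ϱ^6 + (4/9)*κ*b^3*𝒞^3*ϱ^4 + (20/27)*κ*a*ϱ^8 + (4/3)*κ*a*b^2*𝒞^2*ϱ^6 + (4/3)*κ*a^2*b*𝒞*ϱ^8 + (4/9)*κ*a^3*ϱ^10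 + (44/81)*κ*γ*ϱ^6 + (4/9)*κ*γ*b^2*𝒞^2*ϱ^4 + (32/27)*κ*γ*a*b*𝒞*ϱ^6 + (20/27)*κ*γ*a^2*ϱ^8 + (8/81)*κ*γ^2*b*𝒞*ϱ^4 + (16/81)*κ*γ^2*a*ϱ^6 + (8/27)*κ^2*ϱ^8 + (8/27)*κ^2*b^2*𝒞^2*ϱ^6 + (16/27)*κ^2*a*b*𝒞*ϱ^8 + (8/27)*κ^2*a^2*ϱ^10 + (8/81)*κ^2*γ*b*𝒞*ϱ^6 + (8/81)*κ^2*γ*a*ϱ^8 + (25/9)*ν*b*𝒞*ϱ^6 + (5/3)*ν*b^3*𝒞^3*ϱ^4 + (25/9)*ν*a*ϱ^8 + 5*ν*a*b^2*𝒞^2*ϱ^6 + 5*ν*a^2*b*𝒞*ϱ^8 + (5/3)*ν*a^3*ϱ^10 + (40/27)*ν*γ*ϱ^6 + (28/9)*ν*γ*b^2*𝒞^2*ϱ^4 + (44/9)*ν*γ*a*b*𝒞*ϱ^6 + (16/9)*ν*γ*a^2*ϱ^8 + (52/27)*ν*γ^2*b*𝒞*ϱ^4 + (32/27)*ν*γ^2*a*ϱ^6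 + (4/9)*ν*γ^2*a^2*b*𝒞*ϱ^6 + (4/9)*ν*γ^2*a^3*ϱ^8 + (32/81)*ν*γ^3*ϱ^4 + (8/27)*ν*γ^3*a^2*ϱ^6 + (10/9)*ν*κ*ϱ^8 + (14/9)*ν*κ*b^2*𝒞^2*ϱ^6 + (28/9)*ν*κ*a*b*𝒞*ϱ^8 + (14/9)*ν*κ*a^2*ϱ^10 + (76/27)*ν*κ*γ*b*𝒞*ϱ^6 + (20/9)*ν*κ*γ*a*ϱ^8 + (8/9)*ν*κ*γ*a*b^2*𝒞^2*ϱ^6 + (16/9)*ν*κ*γ*a^2*b*𝒞*ϱ^8 + (8/9)*ν*κ*γ*a^3*ϱ^10 + (88/81)*ν*κ*γ^2*ϱ^6 + (16/27)*ν*κ*γ^2*a*b*𝒞*ϱ^6 + (8/9)*ν*κ*γ^2*a^2*ϱ^8 + (28/27)*ν*κ^2*b*𝒞*ϱ^8 + (4/9)*ν*κ^2*b^3*𝒞^3*ϱ^6 + (28/27)*ν*κ^2*a*ϱ^10 + (4/3)*ν*κ^2*a*b^2*𝒞^2*ϱ^8 + (4/3)*ν*κ^2*a^2*b*𝒞*ϱ^10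 + (4/9)*ν*κ^2*a^3*ϱ^12 + (80/81)*ν*κ^2*γ*ϱ^8 + (8/27)*ν*κ^2*γ*b^2*𝒞^2*ϱ^6 + (32/27)*ν*κ^2*γ*a*b*𝒞*ϱ^8 + (8/9)*ν*κ^2*γ*a^2*ϱ^10 + (8/27)*ν*κ^3*ϱ^10 + (8/27)*ν*κ^3*b^2*𝒞^2*ϱ^8 + (16/27)*ν*κ^3*a*b*𝒞*ϱ^10 + (8/27)*ν*κ^3*a^2*ϱ^12 + (5/3)*ν^2*b^2*𝒞^2*ϱ^6 + (10/3)*ν^2*a*b*𝒞*ϱ^8 + (5/3)*ν^2*a^2*ϱ^10 + 2*ν^2*γ*b*𝒞*ϱ^6 + (22/9)*ν^2*γ*a*ϱ^8 + (2/3)*ν^2*γ*a*b^2*𝒞^2*ϱ^6 + (4/3)*ν^2*γ*a^2*b*𝒞*ϱ^8 + (2/3)*ν^2*γ*a^3*ϱ^10 + (16/27)*ν^2*γ^2*ϱ^6 + (8/9)*ν^2*γ^2*a*b*𝒞*ϱ^6 + (8/9)*ν^2*γ^2*a^2*ϱ^8 + (8/27)*ν^2*γ^3*a*ϱ^6 +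 (20/9)*ν^2*κ*b*𝒞*ϱ^8 + (2/3)*ν^2*κ*b^3*𝒞^3*ϱ^6 + (20/9)*ν^2*κ*a*ϱ^10 + 2*ν^2*κ*a*b^2*𝒞^2*ϱ^8 + 2*ν^2*κ*a^2*b*𝒞*ϱ^10 + (2/3)*ν^2*κ*a^3*ϱ^12 + (28/27)*ν^2*κ*γ*ϱ^8 + (8/9)*ν^2*κ*γ*b^2*𝒞^2*ϱ^6 + (8/3)*ν^2*κ*γ*a*b*𝒞*ϱ^8 + (16/9)*ν^2*κ*γ*a^2*ϱ^10 + (8/27)*ν^2*κ*γ^2*b*𝒞*ϱ^6 + (8/9)*ν^2*κ*γ^2*a*ϱ^8 + (4/9)*ν^2*κ^2*ϱ^10 + (8/9)*ν^2*κ^2*b^2*𝒞^2*ϱ^8 + (16/9)*ν^2*κ^2*a*b*𝒞*ϱ^10 + (8/9)*ν^2*κ^2*a^2*ϱ^12 + (16/27)*ν^2*κ^2*γ*b*𝒞*ϱ^8 + (8/9)*ν^2*κ^2*γ*a*ϱ^10 + (8/27)*ν^2*κ^3*b*𝒞*ϱ^10 + (8/27)*ν^2*κ^3*a*ϱ^12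 + (2/3)*ν^3*γ*a*b*𝒞*ϱ^8 + (2/3)*ν^3*γ*a^2*ϱ^10 + (4/9)*ν^3*γ^2*a*ϱ^8 + (2/3)*ν^3*κ*b^2*𝒞^2*ϱ^8 + (4/3)*ν^3*κ*a*b*𝒞*ϱ^10 + (2/3)*ν^3*κ*a^2*ϱ^12 + (4/9)*ν^3*κ*γ*b*𝒞*ϱ^8 + (8/9)*ν^3*κ*γ*a*ϱ^10 + (4/9)*ν^3*κ^2*b*𝒞*ϱ^10 + (4/9)*ν^3*κ^2*a*ϱ^12) := by
      rw [hA3, hA2, hA1, hA0]; ring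
    rw [hexp]
    positivity
  have := quartic_root_neg_re A3 A2 A1 A0 (-μ) hq h3 h2 h1 h0 hΔ
  simpa using this
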